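/- Let G be a topological group whose underlying topological space is an ultraparacompact Hausdorff P-space. Then every open cover of G has a refinement that is a partition of G into left cosets of open subgroups of G. -/

import Mathlib

open scoped Pointwise

/-- A partition of the space `X` into (nonempty, pairwise disjoint) clopen sets. -/
def IsClopenPartition (X : Type*) [TopologicalSpace X] (P : Set (Set X)) : Prop :=
  (∀ S ∈ P, IsClopen S) ∧ (∀ S ∈ P, S.Nonempty) ∧
    (∀ S ∈ P, ∀ T ∈ P, S ≠ T → S ∩ T = ∅) ∧ ⋃₀ P = Set.univ

/-- A space is ultraparacompact if every open cover has a refinement that is a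
partition of the space into clopen sets. -/
def Ultraparacompact (X : Type*) [TopologicalSpace X] : Prop :=
  ∀ 𝒰 : Set (Set X), (∀ U ∈ 𝒰, IsOpen U) → ⋃₀ 𝒰 = Set.univ →
    ∃ P : Set (Set X), IsClopenPartition X P ∧ ∀ S ∈ P, ∃ U ∈ 𝒰, S ⊆ U

/-- A space is ultranormal if any two disjoint closed sets are separated by a clopen set. -/
def Ultranormal (X : Type*) [TopologicalSpace X] : Prop :=
  ∀ R S : Set X, IsClosed R → IsClosed S → Disjoint R S →
    ∃ C : Set X, IsClopen C ∧ R ⊆ C ∧ S ∩ C = ∅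

/-- A space is zero-dimensional if the clopen sets form a basis for the topology. -/
def ZeroDimensional (X : Type*) [TopologicalSpace X] : Prop :=
  TopologicalSpace.IsTopologicalBasis {s : Set X | IsClopen s}


/-- In a topological group that is a P-space, every open neighborhood of `1` contains
an open subgroup. -/
lemma aux_exists_open_subgroup (G : Type*) [Group G] [TopologicalSpace G]
    [IsTopologicalGroup G]
    (hP : ∀ s : ℕ → Set G, (∀ n, IsOpen (s n)) → IsOpen (⋂ n, s n))
    {U : Set G} (hU : IsOpen U) (h1 : (1 : G) ∈ U) :
    ∃ H : Subgroup G, IsOpen (H : Set G) ∧ (H : Set G) ⊆ U := by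
  have step : ∀ V : Set G, IsOpen V → (1 : G) ∈ V →
      ∃ W : Set G, (IsOpen W ∧ (1 : G) ∈ W ∧ W⁻¹ = W) ∧ W * W ⊆ V := by
    intro V hV h1V
    obtain ⟨W, hWo, hW1, hWW⟩ := exists_open_nhds_one_mul_subset (hV.mem_nhds h1V)
    refine ⟨W ∩ W⁻¹, ⟨hWo.inter hWo.inv, ⟨hW1, by simpa using hW1⟩, ?_⟩, ?_⟩
    · ext x; simp [and_comm]
    · exact (Set.mul_subset_mul Set.inter_subset_left Set.inter_subset_left).trans hWW
  obtain ⟨V₀, hV₀, hV₀U⟩ := step U hU h1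
  set β := {V : Set G // IsOpen V ∧ (1 : G) ∈ V ∧ V⁻¹ = V} with hβ
  let f : β → β := fun V => ⟨(step V.1 V.2.1 V.2.2.1).choose,
    (step V.1 V.2.1 V.2.2.1).choose_spec.1⟩
  have hf : ∀ V : β, (f V).1 * (f V).1 ⊆ V.1 := fun V =>
    (step V.1 V.2.1 V.2.2.1).choose_spec.2
  let sq : ℕ → β := fun n => f^[n] ⟨V₀, hV₀⟩
  have hsq : ∀ n, sq (n + 1) = f (sq n) := fun n => Function.iterate_succ_apply' f n _
  have hmul : ∀ n, (sq (n + 1)).1 * (sq (n + 1)).1 ⊆ (sq n).1 := by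
    intro n; rw [hsq n]; exact hf (sq n)
  refine ⟨{ carrier := ⋂ n, (sq n).1
            one_mem' := Set.mem_iInter.mpr fun n => (sq n).2.2.1
            mul_mem' := ?_
            inv_mem' := ?_ }, ?_, ?_⟩
  · intro a b ha hb
    refine Set.mem_iInter.mpr fun n => hmul n (Set.mul_mem_mul ?_ ?_)
    · exact Set.mem_iInter.mp ha (n + 1)
    · exact Set.mem_iInter.mp hb (n + 1)
  · intro a ha
    refine Set.mem_iInter.mpr fun n => ?_
    have h := Set.mem_iInter.mp ha n
    rw [← (sq n).2.2.2]
    simpa using h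
  · exact hP _ fun n => (sq n).2.1
  · intro x hx
    have hx0 : x ∈ (sq 0).1 := Set.mem_iInter.mp hx 0
    have : x * 1 ∈ V₀ * V₀ := Set.mul_mem_mul hx0 hV₀.2.1
    simpa using hV₀U this

lemma aux_coset_eq_of_mem {G : Type*} [Group G] (H : Subgroup G) {g x : G}
    (hx : x ∈ g • (H : Set G)) : g • (H : Set G) = x • (H : Set G) := by
  rw [Set.mem_smul_set] at hx
  obtain ⟨h, hh, rfl⟩ := hx
  show g • (H : Set G) = (g • h) • (H : Set G)
  rw [smul_eq_mul, mul_smul, smul_coe_set hh]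

/-- If `G` is a topological group whose underlying space is an ultraparacompact Hausdorff
P-space, then every open cover of `G` has a refinement that is a partition of `G` into
left cosets of open subgroups of `G`. -/
theorem ultraparacompact_pspace_group_coset_refinement (G : Type*) [Group G]
    [TopologicalSpace G] [IsTopologicalGroup G] [T2Space G]
    (hP : ∀ s : ℕ → Set G, (∀ n, IsOpen (s n)) → IsOpen (⋂ n, s n))
    (hG : Ultraparacompact G) :
    ∀ 𝒰 : Set (Set G), (∀ U ∈ 𝒰, IsOpen U) → ⋃₀ 𝒰 = Set.univ →
      ∃ P : Set (Set G),
        (∀ S ∈ P, ∃ H : Subgroup G, IsOpen (H : Set G) ∧ ∃ g : G, S = g • (H : Set G)) ∧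
        (∀ S ∈ P, ∀ T ∈ P, S ≠ T → S ∩ T = ∅) ∧ ⋃₀ P = Set.univ ∧
        ∀ S ∈ P, ∃ U ∈ 𝒰, S ⊆ U := by
  intro 𝒰 h𝒰o h𝒰c
  classical
  -- pieces of a partition exist and are unique
  have hpiece : ∀ Q : Set (Set G), IsClopenPartition G Q → ∀ x : G, ∃ S, S ∈ Q ∧ x ∈ S := by
    intro Q hQ x
    have hx : x ∈ ⋃₀ Q := by rw [hQ.2.2.2]; trivial
    obtain ⟨S, hS, hxS⟩ := hx
    exact ⟨S, hS, hxS⟩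
  have huniq : ∀ Q : Set (Set G), IsClopenPartition G Q → ∀ S ∈ Q, ∀ T ∈ Q,
      ∀ x : G, x ∈ S → x ∈ T → S = T := by
    intro Q hQ S hS T hT x hxS hxT
    by_contra hne
    have := hQ.2.2.1 S hS T hT hne
    exact absurd (this ▸ Set.mem_inter hxS hxT) (Set.notMem_empty x)
  -- the refinement step
  set Pred : Set (Set G) → Prop :=
    fun Q => IsClopenPartition G Q ∧ ∀ S ∈ Q, ∃ U ∈ 𝒰, S ⊆ U with hPred
  have step : ∀ Q : Set (Set G), Pred Q → ∃ Q', Pred Q' ∧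
      ∀ S ∈ Q', ∃ (g : G) (H : Subgroup G), IsOpen (H : Set G) ∧
        S ⊆ g • (H : Set G) ∧ ∃ T ∈ Q, g • (H : Set G) ⊆ T := by
    intro Q hQ
    set 𝒱 : Set (Set G) := {C | ∃ (g : G) (H : Subgroup G), IsOpen (H : Set G) ∧
      C = g • (H : Set G) ∧ ∃ T ∈ Q, C ⊆ T} with h𝒱
    have h𝒱o : ∀ C ∈ 𝒱, IsOpen C := by
      rintro C ⟨g, H, hHo, rfl, -⟩
      exact hHo.smul g
    have h𝒱c : ⋃₀ 𝒱 = Set.univ := by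
      rw [Set.eq_univ_iff_forall]
      intro x
      obtain ⟨S, hS, hxS⟩ := hpiece Q hQ.1 x
      have hSo : IsOpen S := (hQ.1.1 S hS).2
      have hopen : IsOpen (x⁻¹ • S) := hSo.smul x⁻¹
      have h1mem : (1 : G) ∈ x⁻¹ • S := by
        rw [Set.mem_smul_set_iff_inv_smul_mem]
        simpa using hxS
      obtain ⟨H, hHo, hHsub⟩ := aux_exists_open_subgroup G hP hopen h1mem
      have hxH : x • (H : Set G) ⊆ S := by
        intro z hz
        obtain ⟨h, hh, rfl⟩ := hz
        have := hHsub hh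
        rw [Set.mem_smul_set_iff_inv_smul_mem] at this
        simpa using this
      refine Set.mem_sUnion.mpr ⟨x • (H : Set G), ⟨x, H, hHo, rfl, S, hS, hxH⟩, ?_⟩
      exact ⟨1, H.one_mem, by simp⟩
    obtain ⟨Q', hQ'p, hQ'r⟩ := hG 𝒱 h𝒱o h𝒱c
    refine ⟨Q', ⟨hQ'p, ?_⟩, ?_⟩
    · intro S hS
      obtain ⟨C, ⟨g, H, hHo, rfl, T, hT, hCT⟩, hSC⟩ := hQ'r S hS
      obtain ⟨U, hU, hTU⟩ := hQ.2 T hT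
      exact ⟨U, hU, hSC.trans (hCT.trans hTU)⟩
    · intro S hS
      obtain ⟨C, ⟨g, H, hHo, rfl, T, hT, hCT⟩, hSC⟩ := hQ'r S hS
      exact ⟨g, H, hHo, hSC, T, hT, hCT⟩
  -- iterate the refinement step
  obtain ⟨P₀, hP₀p, hP₀r⟩ := hG 𝒰 h𝒰o h𝒰c
  set β := {Q : Set (Set G) // Pred Q} with hβ
  let f : β → β := fun Q => ⟨(step Q.1 Q.2).choose, (step Q.1 Q.2).choose_spec.1⟩
  have hfrel : ∀ Q : β, ∀ S ∈ (f Q).1, ∃ (g : G) (H : Subgroup G), IsOpen (H : Set G) ∧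
      S ⊆ g • (H : Set G) ∧ ∃ T ∈ Q.1, g • (H : Set G) ⊆ T :=
    fun Q => (step Q.1 Q.2).choose_spec.2
  let sq : ℕ → β := fun n => f^[n] ⟨P₀, hP₀p, hP₀r⟩
  have hsq : ∀ n, sq (n + 1) = f (sq n) := fun n => Function.iterate_succ_apply' f n _
  -- the pieces containing each point
  have hSx : ∀ (n : ℕ) (x : G), ∃ S, S ∈ (sq n).1 ∧ x ∈ S :=
    fun n x => hpiece (sq n).1 (sq n).2.1 x
  choose Sf hSfmem hSfx using hSx
  -- the cosets sandwiched between consecutive pieces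
  have key : ∀ (n : ℕ) (x : G), ∃ H : Subgroup G, IsOpen (H : Set G) ∧
      Sf (n + 1) x ⊆ x • (H : Set G) ∧ x • (H : Set G) ⊆ Sf n x := by
    intro n x
    have hmem : Sf (n + 1) x ∈ (f (sq n)).1 := by rw [← hsq n]; exact hSfmem (n + 1) x
    obtain ⟨g, H, hHo, hsub, T, hT, hTsub⟩ := hfrel (sq n) _ hmem
    have hx : x ∈ g • (H : Set G) := hsub (hSfx (n + 1) x)
    have hco : g • (H : Set G) = x • (H : Set G) := aux_coset_eq_of_mem H hx
    rw [hco] at hsub hTsub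
    have hxT : x ∈ T := hTsub ⟨1, H.one_mem, by simp⟩
    have hTeq : T = Sf n x :=
      huniq (sq n).1 (sq n).2.1 T hT (Sf n x) (hSfmem n x) x hxT (hSfx n x)
    exact ⟨H, hHo, hsub, hTeq ▸ hTsub⟩
  choose Hf hHfo hHf1 hHf2 using key
  set K : G → Subgroup G := fun x => ⨅ n, Hf n x with hK
  set Tset : G → Set G := fun x => x • (K x : Set G) with hTset
  have hTeq : ∀ x, Tset x = ⋂ n, Sf n x := by
    intro x
    ext z
    simp only [hTset, Set.mem_smul_set_iff_inv_smul_mem, SetLike.mem_coe, hK,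
      Subgroup.mem_iInf, Set.mem_iInter]
    constructor
    · intro hz n
      have : z ∈ x • (Hf n x : Set G) := by
        rw [Set.mem_smul_set_iff_inv_smul_mem]
        exact hz n
      exact hHf2 n x this
    · intro hz n
      have : z ∈ x • (Hf n x : Set G) := hHf1 n x (hz (n + 1))
      rw [Set.mem_smul_set_iff_inv_smul_mem] at this
      exact this
  have hxT : ∀ x : G, x ∈ Tset x := by
    intro x
    rw [hTeq]
    exact Set.mem_iInter.mpr fun n => hSfx n x
  refine ⟨Set.range Tset, ?_, ?_, ?_, ?_⟩
  · rintro S ⟨x, rfl⟩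
    refine ⟨K x, ?_, x, rfl⟩
    have : ((K x : Set G)) = ⋂ n, (Hf n x : Set G) := Subgroup.coe_iInf
    rw [this]
    exact hP _ fun n => hHfo n x
  · rintro S ⟨a, rfl⟩ T ⟨b, rfl⟩ hne
    by_contra h
    obtain ⟨z, hza, hzb⟩ := Set.nonempty_iff_ne_empty.mpr h
    rw [hTeq] at hza hzb
    have : ∀ n, Sf n a = Sf n b := fun n =>
      huniq (sq n).1 (sq n).2.1 _ (hSfmem n a) _ (hSfmem n b) z
        (Set.mem_iInter.mp hza n) (Set.mem_iInter.mp hzb n)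
    exact hne (by rw [hTeq, hTeq]; exact Set.iInter_congr this)
  · rw [Set.eq_univ_iff_forall]
    exact fun x => Set.mem_sUnion.mpr ⟨Tset x, Set.mem_range_self x, hxT x⟩
  · rintro S ⟨x, rfl⟩
    obtain ⟨U, hU, hSU⟩ := (sq 0).2.2 (Sf 0 x) (hSfmem 0 x)
    refine ⟨U, hU, ?_⟩
    rw [hTeq]
    exact (Set.iInter_subset _ 0).trans hSU
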